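/- For $\ell \ge 1$ and real $r \ge 1$, the $\ell$-dimensional Lebesgue volume $v_{\ell}(r)$ of the set $\{x \in \mathbb{R}^{\ell} : x_j \ge 1 \text{ for all } j, \prod_{j=1}^{\ell} x_j \le r\}$ satisfies $v_{\ell}(r) \le r \frac{(\ln r)^{\ell-1}}{(\ell-1)!}$. -/

import Mathlib

open MeasureTheory

/-- `v ℓ r` : the `ℓ`-dimensional Lebesgue volume of the hyperbolic-cross set
`{x ∈ ℝ^ℓ : x_j ≥ 1 for all j, ∏ x_j ≤ r}`. -/
noncomputable def hypVol (ℓ : ℕ) (r : ℝ) : ℝ :=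
  (volume {x : Fin ℓ → ℝ | (∀ j, 1 ≤ x j) ∧ ∏ j, x j ≤ r}).toReal

private lemma measSetT (n : ℕ) (r : ℝ) :
    MeasurableSet {p : ℝ × (Fin n → ℝ) | (1 ≤ p.1 ∧ ∀ j, 1 ≤ p.2 j) ∧ p.1 * ∏ j, p.2 j ≤ r} := by
  have h1 : Measurable fun p : ℝ × (Fin n → ℝ) => p.2 := measurable_snd
  apply MeasurableSet.inter
  · apply MeasurableSet.inter
    · exact measurableSet_le measurable_const measurable_fst
    · show MeasurableSet {p : ℝ × (Fin n → ℝ) | ∀ j, 1 ≤ p.2 j}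
      rw [Set.setOf_forall]
      exact MeasurableSet.iInter fun j =>
        measurableSet_le measurable_const (h1.eval (a := j))
  · exact measurableSet_le (measurable_fst.mul <|
      Finset.measurable_prod _ fun j _ => h1.eval (a := j)) measurable_const

private lemma key (n : ℕ) : ∀ r : ℝ, 1 ≤ r →
    volume {x : Fin (n+1) → ℝ | (∀ j, 1 ≤ x j) ∧ ∏ j, x j ≤ r}
      ≤ ENNReal.ofReal (r * (Real.log r) ^ n / n.factorial) := by
  induction n with
  | zero =>
    intro r hr
    have hset : {x : Fin 1 → ℝ | (∀ j, 1 ≤ x j) ∧ ∏ j, x j ≤ r}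
        = (MeasurableEquiv.funUnique (Fin 1) ℝ) ⁻¹' (Set.Icc 1 r) := by
      ext x
      simp [MeasurableEquiv.funUnique, Fin.forall_fin_one, Equiv.funUnique]
    rw [hset]
    refine ((volume_preserving_funUnique (Fin 1) ℝ).measure_preimage_equiv (Set.Icc 1 r)).trans_le ?_
    rw [Real.volume_Icc]
    simp only [pow_zero, Nat.factorial_zero, Nat.cast_one, mul_one, div_one]
    exact ENNReal.ofReal_le_ofReal (by linarith)
  | succ n ih =>
    intro r hr
    have hr0 : (0:ℝ) < r := by linarith
    set L := Real.log r with hL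
    set T := {p : ℝ × (Fin (n+1) → ℝ) | (1 ≤ p.1 ∧ ∀ j, 1 ≤ p.2 j) ∧ p.1 * ∏ j, p.2 j ≤ r}
      with hT
    set e := MeasurableEquiv.piFinSuccAbove (fun _ : Fin (n+2) => ℝ) 0 with he
    have hset : {x : Fin (n+2) → ℝ | (∀ j, 1 ≤ x j) ∧ ∏ j, x j ≤ r} = e ⁻¹' T := by
      ext x
      have hex : e x = (x 0, fun j => x (Fin.succAbove 0 j)) := rfl
      simp only [Set.mem_preimage, hex, hT, Set.mem_setOf_eq, Fin.succAbove_zero,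
        Fin.forall_fin_succ, Fin.prod_univ_succ]
    have hvol : volume {x : Fin (n+2) → ℝ | (∀ j, 1 ≤ x j) ∧ ∏ j, x j ≤ r} = volume T := by
      rw [hset,
        (volume_preserving_piFinSuccAbove (fun _ : Fin (n+2) => ℝ) 0).measure_preimage_equiv]
    set g : ℝ → ℝ := fun t => r / t * (L - Real.log t) ^ n / n.factorial with hg
    have hprod : volume T = ∫⁻ t, volume (Prod.mk t ⁻¹' T) := by
      rw [Measure.volume_eq_prod, Measure.prod_apply (measSetT (n+1) r)]
    have hslice : ∀ t : ℝ, volume (Prod.mk t ⁻¹' T)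
        ≤ Set.indicator (Set.Icc 1 r) (fun t => ENNReal.ofReal (g t)) t := by
      intro t
      by_cases ht : t ∈ Set.Icc 1 r
      · rw [Set.indicator_of_mem ht]
        have ht0 : (0:ℝ) < t := lt_of_lt_of_le one_pos ht.1
        have hslice_eq : Prod.mk t ⁻¹' T
            = {y : Fin (n+1) → ℝ | (∀ j, 1 ≤ y j) ∧ ∏ j, y j ≤ r / t} := by
          ext y
          simp only [Set.mem_preimage, hT, Set.mem_setOf_eq]
          constructor
          · rintro ⟨⟨-, h1⟩, h2⟩
            exact ⟨h1, (le_div_iff₀' ht0).mpr h2⟩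
          · rintro ⟨h1, h2⟩
            exact ⟨⟨ht.1, h1⟩, (le_div_iff₀' ht0).mp h2⟩
        rw [hslice_eq]
        have hrt : (1:ℝ) ≤ r / t := (one_le_div ht0).mpr ht.2
        refine (ih (r / t) hrt).trans (le_of_eq ?_)
        congr 1
        rw [Real.log_div (ne_of_gt hr0) (ne_of_gt ht0)]
      · rw [Set.indicator_of_notMem ht]
        have : Prod.mk t ⁻¹' T = ∅ := by
          ext y
          simp only [Set.mem_preimage, hT, Set.mem_setOf_eq, Set.mem_empty_iff_false,
            iff_false, not_and]
          rintro ⟨ht1, hy⟩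
          have hP : (1:ℝ) ≤ ∏ j, y j := by
            have := Finset.prod_le_prod (s := Finset.univ) (f := fun _ : Fin (n+1) => (1:ℝ)) (g := y)
              (fun j _ => zero_le_one) (fun j _ => hy j)
            simpa using this
          have hrt : r < t := by
            simp only [Set.mem_Icc, not_and, not_le] at ht
            exact ht ht1
          nlinarith
        rw [this]
        simp
    have hcont : ContinuousOn g (Set.Icc 1 r) := by
      have h0 : ∀ t ∈ Set.Icc (1:ℝ) r, t ≠ 0 := fun t ht => ne_of_gt (lt_of_lt_of_le one_pos ht.1)
      have hlog : ContinuousOn Real.log (Set.Icc 1 r) :=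
        Real.continuousOn_log.mono fun t ht => h0 t ht
      exact ((continuousOn_const.div continuousOn_id h0).mul
        ((continuousOn_const.sub hlog).pow n)).div_const _
    have hint : IntegrableOn g (Set.Icc 1 r) := hcont.integrableOn_Icc
    have hpos : 0 ≤ᵐ[volume.restrict (Set.Icc 1 r)] g := by
      refine (ae_restrict_iff' measurableSet_Icc).mpr (Filter.Eventually.of_forall fun t ht => ?_)
      have ht0 : (0:ℝ) < t := lt_of_lt_of_le one_pos ht.1
      have hlt : Real.log t ≤ L := Real.log_le_log ht0 ht.2
      exact div_nonneg (mul_nonneg (div_nonneg hr0.le ht0.le)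
        (pow_nonneg (by linarith) n)) (Nat.cast_nonneg _)
    have hlin : (∫⁻ t in Set.Icc 1 r, ENNReal.ofReal (g t))
        = ENNReal.ofReal (∫ t in Set.Icc 1 r, g t) :=
      (ofReal_integral_eq_lintegral_ofReal hint hpos).symm
    have hFTC : (∫ t in Set.Icc 1 r, g t) = r * L ^ (n+1) / (n+1).factorial := by
      rw [MeasureTheory.integral_Icc_eq_integral_Ioc,
        ← intervalIntegral.integral_of_le hr]
      have hderiv : ∀ t ∈ Set.uIcc (1:ℝ) r, HasDerivAt
          (fun t => -(r / n.factorial) * ((L - Real.log t) ^ (n+1) / (n+1))) (g t) t := by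
        intro t ht
        rw [Set.uIcc_of_le hr] at ht
        have ht0 : (0:ℝ) < t := lt_of_lt_of_le one_pos ht.1
        have h1 : HasDerivAt (fun t : ℝ => L - Real.log t) (-t⁻¹) t := by
          exact (Real.hasDerivAt_log (ne_of_gt ht0)).const_sub L
        have h2 := (h1.pow (n+1)).div_const ((n:ℝ)+1)
        have h3 : HasDerivAt (fun t : ℝ => -(r / n.factorial) * ((L - Real.log t) ^ (n+1) / ((n:ℝ)+1)))
            (-(r / n.factorial) * (((n+1:ℕ):ℝ) * (L - Real.log t) ^ (n + 1 - 1) * -t⁻¹ / ((n:ℝ) + 1))) t :=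
          h2.const_mul (-(r / n.factorial))
        convert h3 using 1
        have hfac : (n.factorial : ℝ) ≠ 0 := Nat.cast_ne_zero.mpr n.factorial_ne_zero
        simp only [Nat.add_sub_cancel, hg, Nat.cast_add, Nat.cast_one]
        field_simp
      rw [intervalIntegral.integral_eq_sub_of_hasDerivAt hderiv
        ((hcont.mono (by rw [Set.uIcc_of_le hr])).intervalIntegrable)]
      simp only [Real.log_one, sub_zero, ← hL, sub_self]
      rw [zero_pow (Nat.succ_ne_zero n)]
      have hfac : ((n+1).factorial : ℝ) = ((n:ℝ)+1) * n.factorial := by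
        rw [Nat.factorial_succ]; push_cast; ring
      rw [hfac]
      have h1 : ((n:ℝ)+1) ≠ 0 := by positivity
      have h2 : (n.factorial:ℝ) ≠ 0 := by positivity
      field_simp
      ring
    calc volume {x : Fin (n+2) → ℝ | (∀ j, 1 ≤ x j) ∧ ∏ j, x j ≤ r}
        = ∫⁻ t, volume (Prod.mk t ⁻¹' T) := by rw [hvol, hprod]
      _ ≤ ∫⁻ t, Set.indicator (Set.Icc 1 r) (fun t => ENNReal.ofReal (g t)) t :=
          lintegral_mono hslice
      _ = ∫⁻ t in Set.Icc 1 r, ENNReal.ofReal (g t) := by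
          rw [lintegral_indicator measurableSet_Icc]
      _ = ENNReal.ofReal (r * L ^ (n+1) / (n+1).factorial) := by rw [hlin, hFTC]

theorem stmt1 (ℓ : ℕ) (hℓ : 1 ≤ ℓ) (r : ℝ) (hr : 1 ≤ r) :
    hypVol ℓ r ≤ r * (Real.log r) ^ (ℓ - 1) / (Nat.factorial (ℓ - 1)) := by
  obtain ⟨n, rfl⟩ := Nat.exists_eq_add_of_le' hℓ
  rw [hypVol]
  have hb : (0:ℝ) ≤ r * (Real.log r) ^ n / n.factorial :=
    div_nonneg (mul_nonneg (by linarith) (pow_nonneg (Real.log_nonneg hr) _))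
      (Nat.cast_nonneg _)
  have h := key n r hr
  have hn : n + 1 - 1 = n := by omega
  rw [hn]
  exact ENNReal.toReal_le_of_le_ofReal hb h
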